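/- arXiv:1108.2581 — 6 statements merged into one kernel-verified Lean document; each statement's English description precedes it below -/
import Mathlib

section
/- Let H be a Hadamard matrix of order k (entries ±1 with H·Hᵀ = k·I). Then the matrix W = [[A, A, H, −H], [A, A, −H, H], [Hᵀ, −Hᵀ, A, A], [−Hᵀ, Hᵀ, A, A]] (a 4k×4k block matrix), where A = u³I − u⁻¹(J − I) and (u² + u⁻²)² = k, satisfies the type II condition: ∑ₓ W(a,x)/W(b,x) = 4k·δ_{a,b}. -/
open Matrix Finset

noncomputable section

abbrev Idx (k : ℕ) := Fin k × ZMod 2 × ZMod 2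

/-- The Potts model `A = u³ I - u⁻¹ (J - I)`. -/
def potts (k : ℕ) (u : ℂ) : Matrix (Fin k) (Fin k) ℂ :=
  Matrix.of fun a b => if a = b then u ^ 3 else -u⁻¹

/-- `H` is a Hadamard matrix: entries `±1` with `H Hᵀ = k I`. -/
def IsHadamard {k : ℕ} (H : Matrix (Fin k) (Fin k) ℂ) : Prop :=
  (∀ a b, H a b = 1 ∨ H a b = -1) ∧ H * Hᵀ = (k : ℂ) • 1

/-- `(-1)^(a+b)` for `a b : ZMod 2`. -/
def sgn (a b : ZMod 2) : ℂ := if a = b then 1 else -1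

/-- `(-1)^s` for `s : ZMod 2`. -/
def pm (s : ZMod 2) : ℂ := if s = 0 then 1 else -1

/-- Normalized symmetric Hadamard model `W̃`, blocks indexed by `(ℤ/2)²`
in the order (0,0),(0,1),(1,0),(1,1). -/
def Wt {k : ℕ} (H : Matrix (Fin k) (Fin k) ℂ) (u : ℂ) : Matrix (Idx k) (Idx k) ℂ :=
  Matrix.of fun p q =>
    if p.2.1 = q.2.1 then potts k u p.1 q.1
    else if p.2.1 = 0 then sgn p.2.2 q.2.2 * H p.1 q.1
    else sgn p.2.2 q.2.2 * H q.1 p.1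

/-- Normalized nonsymmetric Hadamard model `W̃'` (with `im` a primitive 4th root of unity). -/
def Wtp {k : ℕ} (H : Matrix (Fin k) (Fin k) ℂ) (u im : ℂ) : Matrix (Idx k) (Idx k) ℂ :=
  Matrix.of fun p q =>
    if p.2.1 = q.2.1 then potts k u p.1 q.1
    else if p.2.1 = 0 then sgn p.2.2 q.2.2 * H p.1 q.1
    else im * sgn p.2.2 q.2.2 * H q.1 p.1

/-- Hadamard model `W` with 4th root of unity `ω`. -/
def Wom {k : ℕ} (H : Matrix (Fin k) (Fin k) ℂ) (u ω : ℂ) : Matrix (Idx k) (Idx k) ℂ :=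
  Matrix.of fun p q =>
    if p.2.1 = q.2.1 then potts k u p.1 q.1
    else if p.2.1 = 0 then ω * sgn p.2.2 q.2.2 * H p.1 q.1
    else ω * sgn p.2.2 q.2.2 * H q.1 p.1

/-- Nonsymmetric Hadamard model `W'` with primitive 8th root of unity `ξ`. -/
def Wp {k : ℕ} (H : Matrix (Fin k) (Fin k) ℂ) (u ξ : ℂ) : Matrix (Idx k) (Idx k) ℂ :=
  Matrix.of fun p q =>
    if p.2.1 = q.2.1 then potts k u p.1 q.1
    else if p.2.1 = 0 then ξ * sgn p.2.2 q.2.2 * H p.1 q.1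
    else -ξ * sgn p.2.2 q.2.2 * H q.1 p.1

/-- Distance matrices of the Hadamard graph. -/
def Amat0 (k : ℕ) : Matrix (Idx k) (Idx k) ℂ := 1

def Amat1 {k : ℕ} (H : Matrix (Fin k) (Fin k) ℂ) : Matrix (Idx k) (Idx k) ℂ :=
  Matrix.of fun p q =>
    if p.2.1 = q.2.1 then 0
    else if p.2.1 = 0 then (1 + sgn p.2.2 q.2.2 * H p.1 q.1) / 2
    else (1 + sgn p.2.2 q.2.2 * H q.1 p.1) / 2

def Amat2 (k : ℕ) : Matrix (Idx k) (Idx k) ℂ :=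
  Matrix.of fun p q => if p.2.1 = q.2.1 ∧ p.1 ≠ q.1 then 1 else 0

def Amat3 {k : ℕ} (H : Matrix (Fin k) (Fin k) ℂ) : Matrix (Idx k) (Idx k) ℂ :=
  Matrix.of fun p q =>
    if p.2.1 = q.2.1 then 0
    else if p.2.1 = 0 then (1 - sgn p.2.2 q.2.2 * H p.1 q.1) / 2
    else (1 - sgn p.2.2 q.2.2 * H q.1 p.1) / 2

def Amat4 (k : ℕ) : Matrix (Idx k) (Idx k) ℂ :=
  Matrix.of fun p q => if p.1 = q.1 ∧ p.2.1 = q.2.1 ∧ p.2.2 ≠ q.2.2 then 1 else 0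

/-- Adjacency matrix of the directed Hadamard graph. -/
def Amat1' {k : ℕ} (H : Matrix (Fin k) (Fin k) ℂ) : Matrix (Idx k) (Idx k) ℂ :=
  Matrix.of fun p q =>
    if p.2.1 = q.2.1 then 0
    else if p.2.1 = 0 then (1 + sgn p.2.2 q.2.2 * H p.1 q.1) / 2
    else (1 - sgn p.2.2 q.2.2 * H q.1 p.1) / 2

/-- The column vector `Y_{ab}^{αβ}` associated with a matrix `W`. -/
def Yvec {k : ℕ} (W : Matrix (Idx k) (Idx k) ℂ) (a : Fin k) (α : ZMod 2 × ZMod 2)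
    (b : Fin k) (β : ZMod 2 × ZMod 2) : Idx k → ℂ :=
  fun x => W x (a, α) / W x (b, β)

/-- The permutation `τ(α₁,α₂) = (α₁, α₁+α₂)` of `(ℤ/2)²`. -/
def tau : ZMod 2 × ZMod 2 → ZMod 2 × ZMod 2 := fun α => (α.1, α.1 + α.2)

/-- The relation `R₁` of the Hadamard graph scheme. -/
def RelR1 {k : ℕ} (H : Matrix (Fin k) (Fin k) ℂ) : Set (Idx k × Idx k) :=
  {pq | (pq.1.2.1 = 0 ∧ pq.2.2.1 = 1 ∧ H pq.1.1 pq.2.1 = pm (pq.1.2.2 + pq.2.2.2)) ∨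
        (pq.1.2.1 = 1 ∧ pq.2.2.1 = 0 ∧ H pq.2.1 pq.1.1 = pm (pq.1.2.2 + pq.2.2.2))}

/-- The relation `R₃` of the Hadamard graph scheme. -/
def RelR3 {k : ℕ} (H : Matrix (Fin k) (Fin k) ℂ) : Set (Idx k × Idx k) :=
  {pq | (pq.1.2.1 = 0 ∧ pq.2.2.1 = 1 ∧ H pq.1.1 pq.2.1 = pm (pq.1.2.2 + pq.2.2.2 + 1)) ∨
        (pq.1.2.1 = 1 ∧ pq.2.2.1 = 0 ∧ H pq.2.1 pq.1.1 = pm (pq.1.2.2 + pq.2.2.2 + 1))}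

/-- The relation `R'₁` of the directed Hadamard graph scheme. -/
def RelR1' {k : ℕ} (H : Matrix (Fin k) (Fin k) ℂ) : Set (Idx k × Idx k) :=
  {pq | (pq.1.2.1 = 0 ∧ pq.2.2.1 = 1 ∧ H pq.1.1 pq.2.1 = pm (pq.1.2.2 + pq.2.2.2)) ∨
        (pq.1.2.1 = 1 ∧ pq.2.2.1 = 0 ∧ H pq.2.1 pq.1.1 = pm (pq.1.2.2 + pq.2.2.2 + 1))}

/-- The relation `R'₃` of the directed Hadamard graph scheme. -/
def RelR3' {k : ℕ} (H : Matrix (Fin k) (Fin k) ℂ) : Set (Idx k × Idx k) :=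
  {pq | (pq.1.2.1 = 0 ∧ pq.2.2.1 = 1 ∧ H pq.1.1 pq.2.1 = pm (pq.1.2.2 + pq.2.2.2 + 1)) ∨
        (pq.1.2.1 = 1 ∧ pq.2.2.1 = 0 ∧ H pq.2.1 pq.1.1 = pm (pq.1.2.2 + pq.2.2.2))}


section AuxTypeII

lemma zmod2_cases (s : ZMod 2) : s = 0 ∨ s = 1 := by revert s; decide

lemma sum_zmod2 (f : ZMod 2 → ℂ) : ∑ s, f s = f 0 + f 1 := by
  have h : (univ : Finset (ZMod 2)) = {0, 1} := by decide
  rw [h, Finset.sum_insert (by decide), Finset.sum_singleton]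

lemma sgn_one (s : ZMod 2) : sgn s 1 = -sgn s 0 := by
  rcases zmod2_cases s with h | h <;> subst h <;>
    norm_num [sgn, (by decide : (0:ZMod 2) ≠ 1), (by decide : (1:ZMod 2) ≠ 0)]

lemma ratio_sgn (α β t : ZMod 2) {e f : ℂ} (he : e = 1 ∨ e = -1) (hf : f = 1 ∨ f = -1) :
    sgn α t * e / (sgn β t * f) = sgn α β * (e * f) := by
  rcases he with h | h <;> rcases hf with h' | h' <;>
    rcases zmod2_cases α with hα | hα <;> rcases zmod2_cases β with hβ | hβ <;>
      rcases zmod2_cases t with ht | ht <;> subst h h' hα hβ ht <;>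
        norm_num [sgn, (by decide : (0:ZMod 2) ≠ 1), (by decide : (1:ZMod 2) ≠ 0)]

lemma sum_idx {k : ℕ} (f : Idx k → ℂ) :
    ∑ x, f x = ∑ x₁ : Fin k, (f (x₁, 0, 0) + f (x₁, 0, 1) + f (x₁, 1, 0) + f (x₁, 1, 1)) := by
  rw [Fintype.sum_prod_type]
  refine Finset.sum_congr rfl fun x₁ _ => ?_
  rw [Fintype.sum_prod_type, sum_zmod2, sum_zmod2, sum_zmod2]
  ring

lemma had_row {k : ℕ} {H : Matrix (Fin k) (Fin k) ℂ} (hH : _root_.IsHadamard H) (a b : Fin k) :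
    ∑ x, H a x * H b x = (k : ℂ) * (if a = b then 1 else 0) := by
  have := congrFun (congrFun hH.2 a) b
  simpa [Matrix.mul_apply, Matrix.one_apply] using this

lemma had_col {k : ℕ} {H : Matrix (Fin k) (Fin k) ℂ} (hH : _root_.IsHadamard H)
    (hk0 : (k : ℂ) ≠ 0) (a b : Fin k) :
    ∑ x, H x a * H x b = (k : ℂ) * (if a = b then 1 else 0) := by
  have h1 : H * ((k : ℂ)⁻¹ • Hᵀ) = 1 := by
    rw [Matrix.mul_smul, hH.2, smul_smul, inv_mul_cancel₀ hk0, one_smul]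
  have h2 : ((k : ℂ)⁻¹ • Hᵀ) * H = 1 := mul_eq_one_comm.mp h1
  have h3 : Hᵀ * H = (k : ℂ) • 1 := by
    calc Hᵀ * H = (k : ℂ) • (((k : ℂ)⁻¹ • Hᵀ) * H) := by
          rw [Matrix.smul_mul, smul_smul, mul_inv_cancel₀ hk0, one_smul]
      _ = (k : ℂ) • 1 := by rw [h2]
  have := congrFun (congrFun h3 a) b
  simpa [Matrix.mul_apply, Matrix.one_apply] using this

lemma potts_sum {k : ℕ} {u : ℂ} (hu0 : u ≠ 0)
    (hu : (u ^ 2 + (u ^ 2)⁻¹) ^ 2 = (k : ℂ)) (a b : Fin k) :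
    ∑ x, potts k u a x / potts k u b x = (k : ℂ) * (if a = b then 1 else 0) := by
  by_cases hab : a = b
  · subst hab
    have h1 : ∀ x, potts k u a x / potts k u a x = 1 := by
      intro x
      apply div_self
      simp only [potts, Matrix.of_apply]
      split
      · exact pow_ne_zero _ hu0
      · simpa using inv_ne_zero hu0
    simp [h1, Finset.card_univ]
  · have key : ∀ x : Fin k, potts k u a x / potts k u b x
        = 1 + (if x = a then -u ^ 4 - 1 else 0) + (if x = b then -(u ^ 4)⁻¹ - 1 else 0) := by
      intro x
      by_cases hxa : x = a
      · subst hxa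
        have hba : ¬ b = x := fun h => hab h.symm
        simp only [potts, Matrix.of_apply, if_pos rfl, if_neg hba, if_neg hab, if_true]
        field_simp
        ring
      · by_cases hxb : x = b
        · subst hxb
          have hax : ¬ a = x := hab
          simp only [potts, Matrix.of_apply, if_neg hax, if_neg hxa, eq_self_iff_true,
            if_true, if_false]
          field_simp
          ring
        · have hax : ¬ a = x := fun h => hxa h.symm
          have hbx : ¬ b = x := fun h => hxb h.symm
          simp only [potts, Matrix.of_apply, if_neg hax, if_neg hbx, if_neg hxa, if_neg hxb]
          rw [div_self (by simpa using inv_ne_zero hu0)]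
          ring
    rw [Finset.sum_congr rfl fun x _ => key x]
    rw [Finset.sum_add_distrib, Finset.sum_add_distrib, Finset.sum_const,
      Finset.sum_ite_eq' univ a, Finset.sum_ite_eq' univ b]
    have hexp : u ^ 4 + (u ^ 4)⁻¹ + 2 = (k : ℂ) := by
      rw [← hu]; field_simp; ring
    simp only [Finset.mem_univ, if_pos, if_neg hab, Finset.card_univ, Fintype.card_fin,
      nsmul_eq_mul, mul_one]
    linear_combination -hexp

end AuxTypeII

/-- the (normalized) symmetric Hadamard model is a type II matrix. -/
theorem hadamardModel_typeII (k : ℕ) (H : Matrix (Fin k) (Fin k) ℂ)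
    (hH : _root_.IsHadamard H) (u : ℂ) (hu : (u ^ 2 + (u ^ 2)⁻¹) ^ 2 = (k : ℂ)) :
    ∀ a b : Idx k, ∑ x, Wt H u a x / Wt H u b x
      = ((4 * k : ℕ) : ℂ) * (if a = b then 1 else 0) := by
  intro a b
  obtain ⟨a₁, α₁, α₂⟩ := a
  obtain ⟨b₁, β₁, β₂⟩ := b
  rcases Nat.eq_zero_or_pos k with hk | hk
  · subst hk; exact a₁.elim0
  have hk0 : (k : ℂ) ≠ 0 := Nat.cast_ne_zero.mpr hk.ne'
  have hu0 : u ≠ 0 := by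
    intro h; subst h
    simp at hu
    exact hk0 hu.symm
  have hpm := hH.1
  have h01 : (0 : ZMod 2) ≠ 1 := by decide
  have h10 : (1 : ZMod 2) ≠ 0 := by decide
  rw [sum_idx]
  rcases zmod2_cases α₁ with hA | hA <;> rcases zmod2_cases β₁ with hB | hB <;> subst hA <;> subst hB
  · -- α₁ = 0, β₁ = 0
    have key : ∀ x₁ : Fin k,
        Wt H u (a₁, 0, α₂) (x₁, 0, 0) / Wt H u (b₁, 0, β₂) (x₁, 0, 0)
          + Wt H u (a₁, 0, α₂) (x₁, 0, 1) / Wt H u (b₁, 0, β₂) (x₁, 0, 1)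
          + Wt H u (a₁, 0, α₂) (x₁, 1, 0) / Wt H u (b₁, 0, β₂) (x₁, 1, 0)
          + Wt H u (a₁, 0, α₂) (x₁, 1, 1) / Wt H u (b₁, 0, β₂) (x₁, 1, 1)
        = 2 * (potts k u a₁ x₁ / potts k u b₁ x₁)
          + (2 * sgn α₂ β₂) * (H a₁ x₁ * H b₁ x₁) := by
      intro x₁
      simp only [Wt, Matrix.of_apply, h01, h10, eq_self_iff_true, if_true, if_false]
      rw [ratio_sgn α₂ β₂ 0 (hpm a₁ x₁) (hpm b₁ x₁),
        ratio_sgn α₂ β₂ 1 (hpm a₁ x₁) (hpm b₁ x₁)]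
      ring
    rw [Finset.sum_congr rfl fun x₁ _ => key x₁, Finset.sum_add_distrib,
      ← Finset.mul_sum, ← Finset.mul_sum, potts_sum hu0 hu, had_row hH]
    by_cases hab : a₁ = b₁
    · subst hab
      by_cases hAB : α₂ = β₂
      · subst hAB
        simp [sgn]
        ring
      · simp [sgn, hAB, Prod.ext_iff]
    · simp [hab, Prod.ext_iff]
  · -- α₁ = 0, β₁ = 1
    have key : ∀ x₁ : Fin k,
        Wt H u (a₁, 0, α₂) (x₁, 0, 0) / Wt H u (b₁, 1, β₂) (x₁, 0, 0)
          + Wt H u (a₁, 0, α₂) (x₁, 0, 1) / Wt H u (b₁, 1, β₂) (x₁, 0, 1)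
          + Wt H u (a₁, 0, α₂) (x₁, 1, 0) / Wt H u (b₁, 1, β₂) (x₁, 1, 0)
          + Wt H u (a₁, 0, α₂) (x₁, 1, 1) / Wt H u (b₁, 1, β₂) (x₁, 1, 1)
        = 0 := by
      intro x₁
      simp only [Wt, Matrix.of_apply, h01, h10, eq_self_iff_true, if_true, if_false]
      rw [sgn_one α₂, sgn_one β₂, neg_mul, div_neg, neg_mul, neg_div]
      ring
    rw [Finset.sum_congr rfl fun x₁ _ => key x₁, Finset.sum_const_zero]
    simp [Prod.ext_iff, h01]
  · -- α₁ = 1, β₁ = 0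
    have key : ∀ x₁ : Fin k,
        Wt H u (a₁, 1, α₂) (x₁, 0, 0) / Wt H u (b₁, 0, β₂) (x₁, 0, 0)
          + Wt H u (a₁, 1, α₂) (x₁, 0, 1) / Wt H u (b₁, 0, β₂) (x₁, 0, 1)
          + Wt H u (a₁, 1, α₂) (x₁, 1, 0) / Wt H u (b₁, 0, β₂) (x₁, 1, 0)
          + Wt H u (a₁, 1, α₂) (x₁, 1, 1) / Wt H u (b₁, 0, β₂) (x₁, 1, 1)
        = 0 := by
      intro x₁
      simp only [Wt, Matrix.of_apply, h01, h10, eq_self_iff_true, if_true, if_false]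
      rw [sgn_one α₂, sgn_one β₂, neg_mul, neg_div, neg_mul, div_neg]
      ring
    rw [Finset.sum_congr rfl fun x₁ _ => key x₁, Finset.sum_const_zero]
    simp [Prod.ext_iff, h10]
  · -- α₁ = 1, β₁ = 1
    have key : ∀ x₁ : Fin k,
        Wt H u (a₁, 1, α₂) (x₁, 0, 0) / Wt H u (b₁, 1, β₂) (x₁, 0, 0)
          + Wt H u (a₁, 1, α₂) (x₁, 0, 1) / Wt H u (b₁, 1, β₂) (x₁, 0, 1)
          + Wt H u (a₁, 1, α₂) (x₁, 1, 0) / Wt H u (b₁, 1, β₂) (x₁, 1, 0)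
          + Wt H u (a₁, 1, α₂) (x₁, 1, 1) / Wt H u (b₁, 1, β₂) (x₁, 1, 1)
        = 2 * (potts k u a₁ x₁ / potts k u b₁ x₁)
          + (2 * sgn α₂ β₂) * (H x₁ a₁ * H x₁ b₁) := by
      intro x₁
      simp only [Wt, Matrix.of_apply, h01, h10, eq_self_iff_true, if_true, if_false]
      rw [ratio_sgn α₂ β₂ 0 (hpm x₁ a₁) (hpm x₁ b₁),
        ratio_sgn α₂ β₂ 1 (hpm x₁ a₁) (hpm x₁ b₁)]
      ring
    rw [Finset.sum_congr rfl fun x₁ _ => key x₁, Finset.sum_add_distrib,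
      ← Finset.mul_sum, ← Finset.mul_sum, potts_sum hu0 hu, had_col hH hk0]
    by_cases hab : a₁ = b₁
    · subst hab
      by_cases hAB : α₂ = β₂
      · subst hAB
        simp [sgn]
        ring
      · simp [sgn, hAB, Prod.ext_iff]
    · simp [hab, Prod.ext_iff]
end
end

section
/- Let H be a Hadamard matrix of order k and A = u³I − u⁻¹(J − I) with (u²+u⁻²)² = k, and let i be a primitive 4th root of unity. Then the matrix W̃' = [[A, A, H, −H], [A, A, −H, H], [iHᵀ, −iHᵀ, A, A], [−iHᵀ, iHᵀ, A, A]] satisfies the type II condition: ∑ₓ W̃'(a,x)/W̃'(b,x) = 4k·δ_{a,b}. -/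
open Matrix Finset

noncomputable section

lemma zmod2_sum (g : ZMod 2 → ℂ) : ∑ s, g s = g 0 + g 1 := Fin.sum_univ_two g

lemma sgn_mul (x y t : ZMod 2) : sgn x t * sgn y t = sgn x y := by
  have hz : ∀ z : ZMod 2, z = 0 ∨ z = 1 := by decide
  rcases hz x with rfl | rfl <;> rcases hz y with rfl | rfl <;> rcases hz t with rfl | rfl <;>
    simp [sgn, show (0:ZMod 2) ≠ 1 by decide, show (1:ZMod 2) ≠ 0 by decide]

lemma sgn_self (x : ZMod 2) : sgn x x = 1 := by simp [sgn]

lemma sgn_sq (x y : ZMod 2) : sgn x y * sgn x y = 1 := by rw [sgn_mul, sgn_self]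

lemma sgn_add (y : ZMod 2) : sgn y 0 + sgn y 1 = 0 := by
  have hz : ∀ z : ZMod 2, z = 0 ∨ z = 1 := by decide
  rcases hz y with rfl | rfl <;>
    simp [sgn, show (0:ZMod 2) ≠ 1 by decide, show (1:ZMod 2) ≠ 0 by decide]

lemma sgn_ne (x y : ZMod 2) : sgn x y ≠ 0 := by unfold sgn; split <;> norm_num

lemma div_of_sq_one (c d : ℂ) (hd : d * d = 1) : c / d = c * d := by
  rw [div_eq_mul_inv, inv_eq_of_mul_eq_one_right hd]

lemma inv_helper (a s h : ℂ) (ha : a ≠ 0) (hs : s * s = 1) (hh : h * h = 1) :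
    (a * s * h)⁻¹ = a⁻¹ * s * h := by
  refine inv_eq_of_mul_eq_one_right ?_
  rw [show a * s * h * (a⁻¹ * s * h) = a * a⁻¹ * ((s*s)*(h*h)) from by ring,
    mul_inv_cancel₀ ha, hs, hh]; ring

section
variable {k : ℕ} (H : Matrix (Fin k) (Fin k) ℂ)

lemma Hsum (horth : H * Hᵀ = (k:ℂ) • 1) (a b : Fin k) :
    ∑ x, H a x * H b x = if a = b then (k:ℂ) else 0 := by
  have := congrFun (congrFun horth a) b
  simpa [Matrix.mul_apply, Matrix.one_apply, mul_ite, Matrix.transpose_apply] using this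

lemma HsumT (hk : (k:ℂ) ≠ 0) (horth : H * Hᵀ = (k:ℂ) • 1) (a b : Fin k) :
    ∑ x, H x a * H x b = if a = b then (k:ℂ) else 0 := by
  have h1 : H * ((k:ℂ)⁻¹ • Hᵀ) = 1 := by
    rw [Matrix.mul_smul, horth, smul_smul, inv_mul_cancel₀ hk, one_smul]
  have h2 : ((k:ℂ)⁻¹ • Hᵀ) * H = 1 := mul_eq_one_comm.mp h1
  have h3 : Hᵀ * H = (k:ℂ) • 1 := by
    calc Hᵀ * H = (k:ℂ) • (((k:ℂ)⁻¹ • Hᵀ) * H) := by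
          rw [Matrix.smul_mul, smul_smul, mul_inv_cancel₀ hk, one_smul]
      _ = (k:ℂ) • 1 := by rw [h2]
  have := congrFun (congrFun h3 a) b
  simpa [Matrix.mul_apply, Matrix.one_apply, mul_ite, Matrix.transpose_apply] using this

end

lemma potts_diag {k : ℕ} (u : ℂ) (x : Fin k) : potts k u x x = u ^ 3 := by simp [potts]
lemma potts_off {k : ℕ} (u : ℂ) {x y : Fin k} (h : x ≠ y) : potts k u x y = -u⁻¹ := by
  simp [potts, h]

lemma pottsSum {k : ℕ} {u : ℂ} (hu0 : u ≠ 0) (hu : (u ^ 2 + (u ^ 2)⁻¹) ^ 2 = (k : ℂ))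
    (a b : Fin k) : ∑ x, potts k u a x / potts k u b x = if a = b then (k:ℂ) else 0 := by
  by_cases hab : a = b
  · subst hab
    simp only [if_pos rfl]
    have : ∀ x, potts k u a x / potts k u a x = 1 := by
      intro x
      apply div_self
      simp only [potts, Matrix.of_apply]
      split
      · exact pow_ne_zero 3 hu0
      · simpa using inv_ne_zero hu0
    simp [this, Finset.card_univ]
  · simp only [if_neg hab]
    have key : ∀ x, potts k u a x / potts k u b x =
        1 + (if x = a then -u^4 - 1 else 0) + (if x = b then -(u^4)⁻¹ - 1 else 0) := by
      intro x
      by_cases hxa : x = a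
      · subst hxa
        rw [if_pos rfl, if_neg hab, potts_diag, potts_off u (Ne.symm hab)]
        field_simp
        ring
      · by_cases hxb : x = b
        · subst hxb
          rw [if_neg hxa, if_pos rfl, potts_diag, potts_off u hab]
          rw [div_eq_iff (pow_ne_zero 3 hu0)]
          field_simp
          ring
        · rw [if_neg hxa, if_neg hxb, potts_off u (fun h => hxa h.symm),
            potts_off u (fun h => hxb h.symm)]
          rw [div_self (by simpa using inv_ne_zero hu0)]
          ring
    rw [Finset.sum_congr rfl (fun x _ => key x)]
    rw [Finset.sum_add_distrib, Finset.sum_add_distrib, Finset.sum_ite_eq' univ a,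
      Finset.sum_ite_eq' univ b]
    simp only [Finset.mem_univ, if_pos, Finset.sum_const, Finset.card_univ, Fintype.card_fin,
      nsmul_eq_mul, mul_one]
    have hk : (k:ℂ) = u^4 + 2 + (u^4)⁻¹ := by
      rw [← hu]; field_simp; ring
    rw [hk]
    field_simp
    ring


/-- the normalized nonsymmetric Hadamard model `W̃'` is a type II matrix. -/
theorem nonsymHadamardModel_typeII (k : ℕ) (H : Matrix (Fin k) (Fin k) ℂ)
    (hH : _root_.IsHadamard H) (u : ℂ) (hu : (u ^ 2 + (u ^ 2)⁻¹) ^ 2 = (k : ℂ))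
    (im : ℂ) (him : im ^ 2 = -1) :
    ∀ a b : Idx k, ∑ x, Wtp H u im a x / Wtp H u im b x
      = ((4 * k : ℕ) : ℂ) * (if a = b then 1 else 0) := by
  obtain ⟨hpm1, horth⟩ := hH
  rcases Nat.eq_zero_or_pos k with hk | hk
  · subst hk; intro a _; exact a.1.elim0
  have hkC : (k:ℂ) ≠ 0 := Nat.cast_ne_zero.mpr hk.ne'
  have hu0 : u ≠ 0 := by
    rintro rfl; simp at hu; exact hkC hu.symm
  have him0 : im ≠ 0 := by rintro rfl; norm_num at him
  have hHne : ∀ x y, H x y ≠ 0 := by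
    intro x y; rcases hpm1 x y with h | h <;> rw [h] <;> norm_num
  have hHsq : ∀ x y, H x y * H x y = 1 := by
    intro x y; rcases hpm1 x y with h | h <;> rw [h] <;> norm_num
  have hzm : ∀ z : ZMod 2, z = 0 ∨ z = 1 := by decide
  rintro ⟨a1, α1, α2⟩ ⟨b1, β1, β2⟩
  simp only [Wtp, Matrix.of_apply, Fintype.sum_prod_type, zmod2_sum]
  have z01 : ¬ (0:ZMod 2) = 1 := by decide
  have z10 : ¬ (1:ZMod 2) = 0 := by decide
  have hr : ∀ (t : ZMod 2) (x : Fin k),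
      (sgn α2 t * H a1 x) / (sgn β2 t * H b1 x) = sgn α2 β2 * (H a1 x * H b1 x) := by
    intro t x
    rw [div_of_sq_one _ _ (by rw [mul_mul_mul_comm, sgn_sq, hHsq, one_mul]),
      mul_mul_mul_comm, sgn_mul]
  have hrT : ∀ (t : ZMod 2) (x : Fin k),
      (im * sgn α2 t * H x a1) / (im * sgn β2 t * H x b1)
        = sgn α2 β2 * (H x a1 * H x b1) := by
    intro t x
    rw [mul_assoc im, mul_assoc im, mul_div_mul_left _ _ him0,
      div_of_sq_one _ _ (by rw [mul_mul_mul_comm, sgn_sq, hHsq, one_mul]),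
      mul_mul_mul_comm, sgn_mul]
  have final : ∀ γ : ZMod 2, 2 * (if a1 = b1 then (k:ℂ) else 0)
      + 2 * sgn α2 β2 * (if a1 = b1 then (k:ℂ) else 0)
      = ((4 * k : ℕ) : ℂ) * if (a1, γ, α2) = (b1, γ, β2) then 1 else 0 := by
    intro γ
    by_cases h1 : a1 = b1 <;> by_cases h2 : α2 = β2 <;>
      simp [h1, h2, sgn, Prod.ext_iff] <;> push_cast <;> ring
  rcases hzm α1 with rfl | rfl <;> rcases hzm β1 with rfl | rfl <;>
    simp only [reduceIte, if_neg z01, if_neg z10]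
  · trans (∑ x, (2 * (potts k u a1 x / potts k u b1 x)
        + 2 * sgn α2 β2 * (H a1 x * H b1 x)))
    · refine Finset.sum_congr rfl fun x _ => ?_
      rw [hr 0 x, hr 1 x]; ring
    · rw [Finset.sum_add_distrib, ← Finset.mul_sum, ← Finset.mul_sum,
        pottsSum hu0 hu, Hsum H horth]
      exact final 0
  · rw [if_neg (by simp [Prod.ext_iff, z01]), mul_zero]
    refine Finset.sum_eq_zero fun x _ => ?_
    rw [div_eq_mul_inv (potts k u a1 x), div_eq_mul_inv (potts k u a1 x),
      inv_helper im _ _ him0 (sgn_sq β2 0) (hHsq x b1),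
      inv_helper im _ _ him0 (sgn_sq β2 1) (hHsq x b1)]
    have hp : potts k u b1 x ≠ 0 := by
      simp only [potts, Matrix.of_apply]; split
      · exact pow_ne_zero 3 hu0
      · simpa using inv_ne_zero hu0
    field_simp
    linear_combination (potts k u a1 x * (potts k u b1 x) * H x b1) * sgn_add β2
      + (H a1 x * im) * sgn_add α2
  · rw [if_neg (by simp [Prod.ext_iff, z10]), mul_zero]
    refine Finset.sum_eq_zero fun x _ => ?_
    rw [div_of_sq_one _ _ (by rw [mul_mul_mul_comm, sgn_sq, hHsq, one_mul] :
        (sgn β2 0 * H b1 x) * (sgn β2 0 * H b1 x) = 1),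
      div_of_sq_one _ _ (by rw [mul_mul_mul_comm, sgn_sq, hHsq, one_mul] :
        (sgn β2 1 * H b1 x) * (sgn β2 1 * H b1 x) = 1)]
    have hp : potts k u b1 x ≠ 0 := by
      simp only [potts, Matrix.of_apply]; split
      · exact pow_ne_zero 3 hu0
      · simpa using inv_ne_zero hu0
    field_simp
    linear_combination (im * H x a1) * sgn_add α2
      + (potts k u a1 x * potts k u b1 x * H b1 x) * sgn_add β2
  · trans (∑ x, (2 * (potts k u a1 x / potts k u b1 x)
        + 2 * sgn α2 β2 * (H x a1 * H x b1)))
    · refine Finset.sum_congr rfl fun x _ => ?_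
      rw [hrT 0 x, hrT 1 x]; ring
    · rw [Finset.sum_add_distrib, ← Finset.mul_sum, ← Finset.mul_sum,
        pottsSum hu0 hu, HsumT H hkC horth]
      exact final 1
end
end

section
/- In the setting of the normalized symmetric Hadamard model W̃ indexed by X × (ℤ/2ℤ)², let τ be the permutation of (ℤ/2ℤ)² defined by τ(α₁,α₂) = (α₁, α₁+α₂), and let D be the diagonal matrix with entry 1 on X×{(0,0)} ∪ X×{(0,1)} and i on X×{(1,0)} ∪ X×{(1,1)}. Then for all (a,α), (b,β) ∈ X × (ℤ/2ℤ)², the column vector Y^{τ(α)β}_{ab} equals (−D²)^{α₁} · Y^{αβ}_{ab}. -/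
open Matrix Finset

noncomputable section

/-- `Y^{τ(α)β}_{ab} = (-D²)^{α₁} Y^{αβ}_{ab}` for the symmetric
normalized Hadamard model. -/
theorem Yvec_tau (k : ℕ) (H : Matrix (Fin k) (Fin k) ℂ) (hH : _root_.IsHadamard H)
    (u : ℂ) (hu : (u ^ 2 + (u ^ 2)⁻¹) ^ 2 = (k : ℂ)) :
    ∀ (a b : Fin k) (α β : ZMod 2 × ZMod 2),
      Yvec (Wt H u) a (tau α) b β
        = ((-((Matrix.diagonal (fun p : Idx k =>
              if p.2.1 = 0 then 1 else Complex.I)) ^ 2)) ^ α.1.val).mulVec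
            (Yvec (Wt H u) a α b β) := by
  intro a b α β
  obtain ⟨α1, α2⟩ := α
  have hc : ∀ z : ZMod 2, z = 0 ∨ z = 1 := by decide
  have hsgn : ∀ s t : ZMod 2, sgn s (1 + t) = -sgn s t := by
    intro s t
    rcases hc s with hs | hs <;> rcases hc t with ht | ht <;>
      subst hs <;> subst ht <;>
      simp [sgn, show ((1:ZMod 2)+1) = 0 by decide]
  rcases hc α1 with h | h <;> subst h
  · -- α₁ = 0
    simp [tau, Matrix.one_mulVec]
  · -- α₁ = 1
    have htau : tau ((1 : ZMod 2), α2) = (1, 1 + α2) := rfl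
    rw [htau]
    have hval : (1 : ZMod 2).val = 1 := rfl
    rw [hval, pow_one]
    have hdiag : (-((Matrix.diagonal (fun p : Idx k =>
        if p.2.1 = 0 then 1 else Complex.I)) ^ 2))
        = Matrix.diagonal (fun p : Idx k =>
            -((if p.2.1 = 0 then 1 else Complex.I) *
              (if p.2.1 = 0 then 1 else Complex.I))) := by
      rw [sq, Matrix.diagonal_mul_diagonal, Matrix.diagonal_neg]
    rw [hdiag]
    funext x
    rw [Matrix.mulVec_diagonal]
    unfold Yvec Wt
    rcases hc x.2.1 with hx0 | hx1
    · -- x in a block of first kind (row block 0 ≠ column block 1)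
      simp only [Matrix.of_apply, hx0, if_true,
        if_neg (by decide : ¬ ((0 : ZMod 2) = 1))]
      rw [hsgn]
      simp only [if_pos rfl, one_mul, neg_mul, neg_div, mul_one, neg_neg, neg_one_mul]
    · -- x in row block 1 = column block: potts entry, factor becomes -(i*i) = 1
      simp only [Matrix.of_apply, hx1, if_pos rfl,
        if_neg (by decide : ¬ ((1 : ZMod 2) = 0))]
      simp [Complex.I_mul_I]
end
end

section
/- Define τ: (ℤ/2ℤ)² → (ℤ/2ℤ)² by τ(α₁,α₂) = (α₁, α₁+α₂), and σ: (X×(ℤ/2ℤ)²)² → (X×(ℤ/2ℤ)²)² by σ((a,α),(b,β)) = ((a,τ(α)),(b,β)). With R₁, R₃, R'₁, R'₃ the relations of the Hadamard and directed Hadamard association schemes as defined below, σ(R₁) = R'₁ and σ(R₃) = R'₃. -/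
open Matrix Finset

noncomputable section

/-- the permutation `σ((a,α),(b,β)) = ((a,τ(α)),(b,β))` maps `R₁`
onto `R'₁` and `R₃` onto `R'₃`. -/
theorem sigma_maps_relations (k : ℕ) (H : Matrix (Fin k) (Fin k) ℂ)
    (hH : _root_.IsHadamard H) :
    (fun pq : Idx k × Idx k => ((pq.1.1, tau pq.1.2), pq.2)) '' RelR1 H = RelR1' H ∧
    (fun pq : Idx k × Idx k => ((pq.1.1, tau pq.1.2), pq.2)) '' RelR3 H = RelR3' H := by

  classical
  have tt : ∀ α : ZMod 2 × ZMod 2, tau (tau α) = α := by decide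
  have e0 : ∀ x y : ZMod 2, (0 : ZMod 2) + x + y = x + y := by decide
  have e1 : ∀ x y : ZMod 2, (1 : ZMod 2) + x + y + 1 = x + y := by decide
  have e1' : ∀ x y : ZMod 2, (1 : ZMod 2) + x + y = x + y + 1 := by decide
  have e2 : ∀ x y : ZMod 2, x + y + (1 : ZMod 2) + 1 = x + y := by decide
  have hz : ∀ x : ZMod 2, x = 0 ∨ x = 1 := by decide
  let σ : Idx k × Idx k → Idx k × Idx k := fun pq => ((pq.1.1, tau pq.1.2), pq.2)
  have hσ : ∀ pq, σ (σ pq) = pq := by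
    rintro ⟨⟨a, α⟩, q⟩
    simp only [σ, tt]
  have himg : ∀ S T : Set (Idx k × Idx k), (∀ pq, σ pq ∈ T ↔ pq ∈ S) → σ '' S = T := by
    intro S T h
    ext pq
    constructor
    · rintro ⟨x, hx, rfl⟩
      exact (h x).2 hx
    · intro hpq
      exact ⟨σ pq, (h (σ pq)).1 (by rwa [hσ]), hσ pq⟩
  constructor
  all_goals
    apply himg
    rintro ⟨⟨a, α1, α2⟩, ⟨b, β1, β2⟩⟩
    simp only [σ, RelR1, RelR1', RelR3, RelR3', Set.mem_setOf_eq, tau]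
    rcases hz α1 with rfl | rfl <;>
      simp [e0, e1, e1', e2]
end
end

section
/- In the setting of the normalized Hadamard models W̃ and W̃' indexed by X × (ℤ/2ℤ)², if ((a,α),(b,β)) and ((a',α'),(b',β')) both lie in R₁ ∪ R₃ (equivalently, α₁ ≠ β₁ and α'₁ ≠ β'₁), then ⟨Y'^{τ(α)β}_{ab}, Y'^{τ(α')β'}_{a'b'}⟩ = (−1)^{α₁+α'₁} · ⟨Y^{αβ}_{ab}, Y^{α'β'}_{a'b'}⟩, where ⟨·,·⟩ is the Hermitian inner product and τ(α₁,α₂) = (α₁,α₁+α₂). -/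
open Matrix Finset

noncomputable section

/-- Auxiliary: case analysis on `ZMod 2`. -/
lemma z2cases : ∀ x : ZMod 2, x = 0 ∨ x = 1 := by decide

lemma sgn_one_add (a b : ZMod 2) : sgn a (1 + b) = - sgn a b := by
  rcases z2cases a with rfl | rfl <;> rcases z2cases b with rfl | rfl <;>
    simp [sgn] <;> try decide

lemma conj_im_aux {im : ℂ} (him : im ^ 2 = -1) :
    starRingEnd ℂ im = -im := by
  have h0 : (im - Complex.I) * (im + Complex.I) = 0 := by
    linear_combination him - Complex.I_sq
  rcases mul_eq_zero.mp h0 with h | h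
  · rw [sub_eq_zero.mp h]; simp
  · rw [eq_neg_of_add_eq_zero_left h]; simp

/-- The `eps` factor relating `Wtp` (shifted by `tau`) to `Wt` in the numerator. -/
def epsN (im : ℂ) (g t : ZMod 2) : ℂ :=
  if g = 0 then (if t = 0 then 1 else -1) else (if t = 0 then im else 1)

/-- The `eps` factor relating `Wtp` to `Wt` in the denominator. -/
def epsD (im : ℂ) (g t : ZMod 2) : ℂ :=
  if g = 1 ∧ t = 0 then im else 1

lemma wtp_num {k : ℕ} (H : Matrix (Fin k) (Fin k) ℂ) (u im : ℂ)
    (x : Idx k) (a : Fin k) (α : ZMod 2 × ZMod 2) :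
    Wtp H u im x (a, tau α) = epsN im x.2.1 α.1 * Wt H u x (a, α) := by
  obtain ⟨c, g, d⟩ := x
  obtain ⟨t, s⟩ := α
  rcases z2cases g with rfl | rfl <;> rcases z2cases t with rfl | rfl <;>
    simp [Wtp, Wt, tau, epsN, sgn_one_add, zero_add] <;> ring

lemma wtp_den {k : ℕ} (H : Matrix (Fin k) (Fin k) ℂ) (u im : ℂ)
    (x : Idx k) (b : Fin k) (β : ZMod 2 × ZMod 2) :
    Wtp H u im x (b, β) = epsD im x.2.1 β.1 * Wt H u x (b, β) := by
  obtain ⟨c, g, d⟩ := x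
  obtain ⟨t, s⟩ := β
  rcases z2cases g with rfl | rfl <;> rcases z2cases t with rfl | rfl <;>
    simp [Wtp, Wt, epsD] <;> ring

lemma factor_lemma {im : ℂ} (him : im ^ 2 = -1) (g t s t' s' : ZMod 2)
    (h1 : t ≠ s) (h2 : t' ≠ s') :
    (epsN im g t / epsD im g s) * starRingEnd ℂ (epsN im g t' / epsD im g s')
      = pm (t + t') := by
  have hc : starRingEnd ℂ im = -im := conj_im_aux him
  have hinv : im⁻¹ = -im := by
    refine inv_eq_of_mul_eq_one_right ?_
    linear_combination -him
  rcases z2cases g with rfl | rfl <;>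
    rcases z2cases t with rfl | rfl <;> rcases z2cases s with rfl | rfl <;>
    rcases z2cases t' with rfl | rfl <;> rcases z2cases s' with rfl | rfl <;>
    simp_all [epsN, epsD, pm, div_eq_mul_inv, hinv, _root_.map_mul, map_neg,
      map_inv₀, show (1 + 1 : ZMod 2) = 0 from by decide] <;>
    first
      | ring1
      | linear_combination him
      | linear_combination -him
      | linear_combination 2 * him
      | linear_combination -2 * him

/-- for pairs in `R₁ ∪ R₃`, the Hermitian inner products of the
`τ`-shifted `Y'` vectors and of the `Y` vectors differ by `(-1)^{α₁+α'₁}`. -/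
theorem Yvec_inner_product (k : ℕ) (H : Matrix (Fin k) (Fin k) ℂ)
    (hH : _root_.IsHadamard H)
    (u : ℂ) (hu : (u ^ 2 + (u ^ 2)⁻¹) ^ 2 = (k : ℂ))
    (im : ℂ) (him : im ^ 2 = -1)
    (a b a' b' : Fin k) (α β α' β' : ZMod 2 × ZMod 2)
    (h : ((a, α), (b, β)) ∈ RelR1 H ∪ RelR3 H)
    (h' : ((a', α'), (b', β')) ∈ RelR1 H ∪ RelR3 H) :
    ∑ x, Yvec (Wtp H u im) a (tau α) b β x
        * starRingEnd ℂ (Yvec (Wtp H u im) a' (tau α') b' β' x)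
      = pm (α.1 + α'.1)
        * ∑ x, Yvec (Wt H u) a α b β x
            * starRingEnd ℂ (Yvec (Wt H u) a' α' b' β' x) := by
  have hab : α.1 ≠ β.1 := by
    rcases h with h | h <;>
      rcases h with ⟨h1, h2, -⟩ | ⟨h1, h2, -⟩ <;>
        simp only at h1 h2 <;> rw [h1, h2] <;> decide
  have hab' : α'.1 ≠ β'.1 := by
    rcases h' with h' | h' <;>
      rcases h' with ⟨h1, h2, -⟩ | ⟨h1, h2, -⟩ <;>
        simp only at h1 h2 <;> rw [h1, h2] <;> decide
  rw [Finset.mul_sum]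
  refine Finset.sum_congr rfl fun x _ => ?_
  have e1 : Yvec (Wtp H u im) a (tau α) b β x
      = (epsN im x.2.1 α.1 / epsD im x.2.1 β.1) * Yvec (Wt H u) a α b β x := by
    show Wtp H u im x (a, tau α) / Wtp H u im x (b, β) = _
    rw [wtp_num H u im x a α, wtp_den H u im x b β, mul_div_mul_comm]; rfl
  have e2 : Yvec (Wtp H u im) a' (tau α') b' β' x
      = (epsN im x.2.1 α'.1 / epsD im x.2.1 β'.1) * Yvec (Wt H u) a' α' b' β' x := by
    show Wtp H u im x (a', tau α') / Wtp H u im x (b', β') = _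
    rw [wtp_num H u im x a' α', wtp_den H u im x b' β', mul_div_mul_comm]; rfl
  rw [e1, e2, _root_.map_mul]
  have hf := factor_lemma him x.2.1 α.1 β.1 α'.1 β'.1 hab hab'
  linear_combination (Yvec (Wt H u) a α b β x *
      starRingEnd ℂ (Yvec (Wt H u) a' α' b' β' x)) * hf
end
end

section
/- Let H be a Hadamard matrix of order k indexed by X, and define on X × (ℤ/2ℤ)² the relations R₀ (equality), R₂ = {((a,α),(b,β)) : α₁ = β₁, a ≠ b}, R₄ = {((a,α),(b,β)) : a = b, α₁ = β₁, α₂ ≠ β₂}, together with R₁ and R₃ as defined below. Then R₀, R₁, R₂, R₃, R₄ partition (X × (ℤ/2ℤ)²)², each is symmetric (invariant under swapping the pair), and their adjacency 0-1 matrices coincide with the distance matrices A₀, A₁, A₂, A₃, A₄ of the Hadamard graph. -/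
open Matrix Finset

noncomputable section

def RelR0 (k : ℕ) : Set (Idx k × Idx k) := {pq | pq.1 = pq.2}

def RelR2 (k : ℕ) : Set (Idx k × Idx k) :=
  {pq | pq.1.2.1 = pq.2.2.1 ∧ pq.1.1 ≠ pq.2.1}

def RelR4 (k : ℕ) : Set (Idx k × Idx k) :=
  {pq | pq.1.1 = pq.2.1 ∧ pq.1.2.1 = pq.2.2.1 ∧ pq.1.2.2 ≠ pq.2.2.2}

lemma zmod2_or : ∀ s : ZMod 2, s = 0 ∨ s = 1 := by decide

lemma zmod2_ne {s t : ZMod 2} (h : s ≠ t) : (s = 0 ∧ t = 1) ∨ (s = 1 ∧ t = 0) := by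
  rcases zmod2_or s with hs | hs <;> rcases zmod2_or t with ht | ht <;> subst hs <;> subst ht <;> simp_all

lemma pm_cases (s : ZMod 2) : (pm s = 1 ∧ pm (s+1) = -1) ∨ (pm s = -1 ∧ pm (s+1) = 1) := by
  rcases zmod2_or s with hs | hs <;> subst hs <;>
    simp only [pm, show ((1:ZMod 2)+1=0) from by decide, show ((0:ZMod 2)+1=1) from by decide,
      if_pos rfl, if_neg (show ((1:ZMod 2) ≠ 0) from by decide)] <;> norm_num

lemma pm_ne (s : ZMod 2) : pm s ≠ pm (s+1) := by
  rcases pm_cases s with ⟨h1,h2⟩|⟨h1,h2⟩ <;> rw [h1,h2] <;> norm_num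

lemma pm_or (s : ZMod 2) : pm s = 1 ∨ pm s = -1 := by
  rcases pm_cases s with ⟨h1,-⟩|⟨h1,-⟩ <;> [left; right] <;> exact h1

lemma pm_add_one (s : ZMod 2) : pm (s+1) = -pm s := by
  rcases pm_cases s with ⟨h1,h2⟩|⟨h1,h2⟩ <;> rw [h1,h2] <;> norm_num

lemma sgn_eq (s t : ZMod 2) : sgn s t = pm (s+t) := by
  rcases zmod2_or s with hs | hs <;> rcases zmod2_or t with ht | ht <;> subst hs <;> subst ht <;>
    simp only [pm, sgn, show ((1:ZMod 2)+1=0) from by decide, show ((0:ZMod 2)+1=1) from by decide,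
      show ((0:ZMod 2)+0=0) from by decide, show ((1:ZMod 2)+0=1) from by decide,
      if_pos rfl, if_neg (show ((1:ZMod 2) ≠ 0) from by decide)] <;>
    norm_num [show ((0:ZMod 2) ≠ 1) from by decide, show ((1:ZMod 2) ≠ 0) from by decide]

lemma key1 {h c : ℂ} (hh : h = 1 ∨ h = -1) (hc : c = 1 ∨ c = -1) :
    (1 + c * h)/2 = if h = c then 1 else 0 := by
  rcases hh with h1 | h1 <;> rcases hc with h2 | h2 <;> subst h1 <;> subst h2 <;> norm_num

lemma key3 {h c : ℂ} (hh : h = 1 ∨ h = -1) (hc : c = 1 ∨ c = -1) :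
    (1 - c * h)/2 = if h = -c then 1 else 0 := by
  rcases hh with h1 | h1 <;> rcases hc with h2 | h2 <;> subst h1 <;> subst h2 <;> norm_num

lemma zmod01 : (0:ZMod 2) ≠ 1 := by decide

-- disjointness lemmas
lemma d01 {k : ℕ} (H : Matrix (Fin k) (Fin k) ℂ) : RelR0 k ∩ RelR1 H = ∅ := by
  rw [Set.eq_empty_iff_forall_notMem]
  rintro ⟨p, q⟩ ⟨h0, h1 | h1⟩ <;> rw [show p = q from h0] at h1
  · exact zmod01 (h1.1.symm.trans h1.2.1)
  · exact zmod01 (h1.2.1.symm.trans h1.1)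

lemma d03 {k : ℕ} (H : Matrix (Fin k) (Fin k) ℂ) : RelR0 k ∩ RelR3 H = ∅ := by
  rw [Set.eq_empty_iff_forall_notMem]
  rintro ⟨p, q⟩ ⟨h0, h1 | h1⟩ <;> rw [show p = q from h0] at h1
  · exact zmod01 (h1.1.symm.trans h1.2.1)
  · exact zmod01 (h1.2.1.symm.trans h1.1)

lemma d02 {k : ℕ} : RelR0 k ∩ RelR2 k = ∅ := by
  rw [Set.eq_empty_iff_forall_notMem]
  rintro ⟨p, q⟩ ⟨h0, -, h2⟩
  exact h2 (by rw [show p = q from h0])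

lemma d04 {k : ℕ} : RelR0 k ∩ RelR4 k = ∅ := by
  rw [Set.eq_empty_iff_forall_notMem]
  rintro ⟨p, q⟩ ⟨h0, -, -, h2⟩
  exact h2 (by rw [show p = q from h0])

lemma d12 {k : ℕ} (H : Matrix (Fin k) (Fin k) ℂ) : RelR1 H ∩ RelR2 k = ∅ := by
  rw [Set.eq_empty_iff_forall_notMem]
  rintro ⟨p, q⟩ ⟨h1 | h1, he, -⟩ <;>
    [exact zmod01 ((h1.1.symm.trans he).trans h1.2.1);
     exact zmod01 ((h1.2.1.symm.trans he.symm).trans h1.1)]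

lemma d32 {k : ℕ} (H : Matrix (Fin k) (Fin k) ℂ) : RelR3 H ∩ RelR2 k = ∅ := by
  rw [Set.eq_empty_iff_forall_notMem]
  rintro ⟨p, q⟩ ⟨h1 | h1, he, -⟩ <;>
    [exact zmod01 ((h1.1.symm.trans he).trans h1.2.1);
     exact zmod01 ((h1.2.1.symm.trans he.symm).trans h1.1)]

lemma d14 {k : ℕ} (H : Matrix (Fin k) (Fin k) ℂ) : RelR1 H ∩ RelR4 k = ∅ := by
  rw [Set.eq_empty_iff_forall_notMem]
  rintro ⟨p, q⟩ ⟨h1 | h1, -, he, -⟩ <;>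
    [exact zmod01 ((h1.1.symm.trans he).trans h1.2.1);
     exact zmod01 ((h1.2.1.symm.trans he.symm).trans h1.1)]

lemma d34 {k : ℕ} (H : Matrix (Fin k) (Fin k) ℂ) : RelR3 H ∩ RelR4 k = ∅ := by
  rw [Set.eq_empty_iff_forall_notMem]
  rintro ⟨p, q⟩ ⟨h1 | h1, -, he, -⟩ <;>
    [exact zmod01 ((h1.1.symm.trans he).trans h1.2.1);
     exact zmod01 ((h1.2.1.symm.trans he.symm).trans h1.1)]

lemma d13 {k : ℕ} (H : Matrix (Fin k) (Fin k) ℂ) : RelR1 H ∩ RelR3 H = ∅ := by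
  rw [Set.eq_empty_iff_forall_notMem]
  rintro ⟨p, q⟩ ⟨h1 | h1, h3 | h3⟩
  · exact pm_ne _ (h1.2.2.symm.trans h3.2.2)
  · exact zmod01 (h1.1.symm.trans h3.1)
  · exact zmod01 (h3.1.symm.trans h1.1)
  · exact pm_ne _ (h1.2.2.symm.trans h3.2.2)

lemma d24 {k : ℕ} : RelR2 k ∩ RelR4 k = ∅ := by
  rw [Set.eq_empty_iff_forall_notMem]
  rintro ⟨p, q⟩ ⟨⟨-, h2⟩, h4, -⟩
  exact h2 h4

lemma interFlip {α : Type*} {S T : Set α} (h : S ∩ T = ∅) : T ∩ S = ∅ := by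
  rw [Set.inter_comm]; exact h


open scoped Classical in
/-- `R₀,…,R₄` partition `(X×(ℤ/2)²)²`, each is symmetric, and
their 0-1 adjacency matrices coincide with the distance matrices of the
Hadamard graph. -/
theorem hadamard_relations_partition (k : ℕ) (H : Matrix (Fin k) (Fin k) ℂ)
    (hH : _root_.IsHadamard H) :
    ∀ (Rs : Fin 5 → Set (Idx k × Idx k)) (As : Fin 5 → Matrix (Idx k) (Idx k) ℂ),
      Rs = ![RelR0 k, RelR1 H, RelR2 k, RelR3 H, RelR4 k] →
      As = ![Amat0 k, Amat1 H, Amat2 k, Amat3 H, Amat4 k] →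
      (⋃ i, Rs i) = Set.univ ∧
      (∀ i j, i ≠ j → Rs i ∩ Rs j = ∅) ∧
      (∀ i (p q : Idx k), (p, q) ∈ Rs i ↔ (q, p) ∈ Rs i) ∧
      (∀ i (p q : Idx k), As i p q = if (p, q) ∈ Rs i then 1 else 0) := by
  intro Rs As hRs hAs
  subst hRs; subst hAs
  refine ⟨?_, ?_, ?_, ?_⟩
  · -- union
    ext ⟨p, q⟩
    simp only [Set.mem_iUnion, Set.mem_univ, iff_true]
    obtain ⟨a, α1, α2⟩ := p; obtain ⟨b, β1, β2⟩ := q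
    by_cases h1 : α1 = β1
    · by_cases hab : a = b
      · by_cases h2 : α2 = β2
        · exact ⟨0, show _ ∈ RelR0 k from Prod.ext hab (Prod.ext h1 h2)⟩
        · exact ⟨4, show _ ∈ RelR4 k from ⟨hab, h1, h2⟩⟩
      · exact ⟨2, show _ ∈ RelR2 k from ⟨h1, hab⟩⟩
    · rcases zmod2_ne h1 with ⟨hα, hβ⟩ | ⟨hα, hβ⟩
      · rcases hH.1 a b with hv | hv <;> rcases pm_cases (α2 + β2) with ⟨c1, c2⟩ | ⟨c1, c2⟩
        · exact ⟨1, show _ ∈ RelR1 H from Or.inl ⟨hα, hβ, by rw [hv, c1]⟩⟩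
        · exact ⟨3, show _ ∈ RelR3 H from Or.inl ⟨hα, hβ, by rw [hv, c2]⟩⟩
        · exact ⟨3, show _ ∈ RelR3 H from Or.inl ⟨hα, hβ, by rw [hv, c2]⟩⟩
        · exact ⟨1, show _ ∈ RelR1 H from Or.inl ⟨hα, hβ, by rw [hv, c1]⟩⟩
      · rcases hH.1 b a with hv | hv <;> rcases pm_cases (α2 + β2) with ⟨c1, c2⟩ | ⟨c1, c2⟩
        · exact ⟨1, show _ ∈ RelR1 H from Or.inr ⟨hα, hβ, by rw [hv, c1]⟩⟩
        · exact ⟨3, show _ ∈ RelR3 H from Or.inr ⟨hα, hβ, by rw [hv, c2]⟩⟩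
        · exact ⟨3, show _ ∈ RelR3 H from Or.inr ⟨hα, hβ, by rw [hv, c2]⟩⟩
        · exact ⟨1, show _ ∈ RelR1 H from Or.inr ⟨hα, hβ, by rw [hv, c1]⟩⟩
  · -- disjoint
    intro i j hij
    fin_cases i <;> fin_cases j <;> first
      | exact absurd rfl hij
      | exact d01 H | exact d02 | exact d03 H | exact d04
      | exact d12 H | exact d13 H | exact d14 H
      | exact d24 | exact d32 H | exact d34 H
      | exact interFlip (d01 H) | exact interFlip d02 | exact interFlip (d03 H) | exact interFlip d04
      | exact interFlip (d12 H) | exact interFlip (d13 H) | exact interFlip (d14 H)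
      | exact interFlip d24 | exact interFlip (d32 H) | exact interFlip (d34 H)
  · -- symmetry
    intro i p q
    fin_cases i
    · exact ⟨fun h => (show p = q from h).symm, fun h => (show q = p from h).symm⟩
    · constructor <;> rintro (⟨h1, h2, h3⟩ | ⟨h1, h2, h3⟩)
      · exact Or.inr ⟨h2, h1, by rw [h3, add_comm]⟩
      · exact Or.inl ⟨h2, h1, by rw [h3, add_comm]⟩
      · exact Or.inr ⟨h2, h1, by rw [h3, add_comm]⟩
      · exact Or.inl ⟨h2, h1, by rw [h3, add_comm]⟩
    · exact ⟨fun ⟨h1, h2⟩ => ⟨h1.symm, h2.symm⟩, fun ⟨h1, h2⟩ => ⟨h1.symm, h2.symm⟩⟩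
    · constructor <;> rintro (⟨h1, h2, h3⟩ | ⟨h1, h2, h3⟩)
      · exact Or.inr ⟨h2, h1, by rw [h3, add_comm p.2.2]⟩
      · exact Or.inl ⟨h2, h1, by rw [h3, add_comm p.2.2]⟩
      · exact Or.inr ⟨h2, h1, by rw [h3, add_comm q.2.2]⟩
      · exact Or.inl ⟨h2, h1, by rw [h3, add_comm q.2.2]⟩
    · exact ⟨fun ⟨h1, h2, h3⟩ => ⟨h1.symm, h2.symm, h3.symm⟩,
             fun ⟨h1, h2, h3⟩ => ⟨h1.symm, h2.symm, h3.symm⟩⟩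
  · -- matrices
    intro i p q
    fin_cases i
    · show Amat0 k p q = if (p, q) ∈ RelR0 k then 1 else 0
      by_cases h : (p, q) ∈ RelR0 k <;> [rw [if_pos h]; rw [if_neg h]] <;> simp_all [Amat0, Matrix.one_apply, RelR0]
    · show Amat1 H p q = if (p, q) ∈ RelR1 H then 1 else 0
      by_cases h1 : p.2.1 = q.2.1
      · rw [show Amat1 H p q = 0 from if_pos h1, if_neg]
        rintro (⟨ha, hb, -⟩ | ⟨ha, hb, -⟩)
        · exact zmod01 ((ha.symm.trans h1).trans hb)
        · exact zmod01 ((hb.symm.trans h1.symm).trans ha)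
      · rcases zmod2_ne h1 with ⟨ha, hb⟩ | ⟨ha, hb⟩
        · rw [show Amat1 H p q = (1 + sgn p.2.2 q.2.2 * H p.1 q.1) / 2 from by
            simp [Amat1, if_neg h1, if_pos ha]]
          rw [sgn_eq, key1 (hH.1 p.1 q.1) (pm_or _)]
          refine if_congr ⟨fun h => Or.inl ⟨ha, hb, h⟩, ?_⟩ rfl rfl
          rintro (⟨-, -, h⟩ | ⟨hc, -, -⟩)
          · exact h
          · exact absurd (ha.symm.trans hc) zmod01
        · rw [show Amat1 H p q = (1 + sgn p.2.2 q.2.2 * H q.1 p.1) / 2 from by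
            simp [Amat1, if_neg h1, if_neg (show ¬ p.2.1 = 0 by rw [ha]; exact fun h => zmod01 h.symm)]]
          rw [sgn_eq, key1 (hH.1 q.1 p.1) (pm_or _)]
          refine if_congr ⟨fun h => Or.inr ⟨ha, hb, h⟩, ?_⟩ rfl rfl
          rintro (⟨hc, -, -⟩ | ⟨-, -, h⟩)
          · exact absurd (hc.symm.trans ha) zmod01
          · exact h
    · show Amat2 k p q = if (p, q) ∈ RelR2 k then 1 else 0
      by_cases h : (p, q) ∈ RelR2 k <;> [rw [if_pos h]; rw [if_neg h]] <;> simp_all [Amat2, RelR2]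
    · show Amat3 H p q = if (p, q) ∈ RelR3 H then 1 else 0
      by_cases h1 : p.2.1 = q.2.1
      · rw [show Amat3 H p q = 0 from if_pos h1, if_neg]
        rintro (⟨ha, hb, -⟩ | ⟨ha, hb, -⟩)
        · exact zmod01 ((ha.symm.trans h1).trans hb)
        · exact zmod01 ((hb.symm.trans h1.symm).trans ha)
      · rcases zmod2_ne h1 with ⟨ha, hb⟩ | ⟨ha, hb⟩
        · rw [show Amat3 H p q = (1 - sgn p.2.2 q.2.2 * H p.1 q.1) / 2 from by
            simp [Amat3, if_neg h1, if_pos ha]]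
          rw [sgn_eq, key3 (hH.1 p.1 q.1) (pm_or _), ← pm_add_one]
          refine if_congr ⟨fun h => Or.inl ⟨ha, hb, h⟩, ?_⟩ rfl rfl
          rintro (⟨-, -, h⟩ | ⟨hc, -, -⟩)
          · exact h
          · exact absurd (ha.symm.trans hc) zmod01
        · rw [show Amat3 H p q = (1 - sgn p.2.2 q.2.2 * H q.1 p.1) / 2 from by
            simp [Amat3, if_neg h1, if_neg (show ¬ p.2.1 = 0 by rw [ha]; exact fun h => zmod01 h.symm)]]
          rw [sgn_eq, key3 (hH.1 q.1 p.1) (pm_or _), ← pm_add_one]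
          refine if_congr ⟨fun h => Or.inr ⟨ha, hb, h⟩, ?_⟩ rfl rfl
          rintro (⟨hc, -, -⟩ | ⟨-, -, h⟩)
          · exact absurd (hc.symm.trans ha) zmod01
          · exact h
    · show Amat4 k p q = if (p, q) ∈ RelR4 k then 1 else 0
      by_cases h : (p, q) ∈ RelR4 k <;> [rw [if_pos h]; rw [if_neg h]] <;> simp_all [Amat4, RelR4]
end
end
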